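/- arXiv:2507.02796 — 3 statements merged into one kernel-verified Lean document; each statement's English description precedes it below -/
import Mathlib

section
/- The Lamperti density l(y) = (sin(πν)/π) · y^{ν-1} / (y^{2ν} + 2 y^ν cos(πν) + 1) on (0,∞), with parameter ν ∈ (0,1), is nonnegative and integrates to a probability (∫_0^∞ l(y) dy = 1). -/
open MeasureTheory Set
open Real Filter


lemma aux_den_pos {c s : ℝ} (hcs : c^2 + s^2 = 1) (hs : 0 < s) (u : ℝ) :
    0 < u^2 + 2*c*u + 1 := by nlinarith [sq_nonneg (u + c)]

lemma aux_integral {c s : ℝ} (hcs : c^2 + s^2 = 1) (hs : 0 < s) :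
    ∫ u in Ioi (0:ℝ), 1/(u^2 + 2*c*u + 1) = (π/2 - arctan (c/s)) / s := by
  have hs' : s ≠ 0 := ne_of_gt hs
  have hderiv : ∀ u ∈ Ioi (0:ℝ),
      HasDerivAt (fun u => arctan ((u + c)/s) / s) (1/(u^2 + 2*c*u + 1)) u := by
    intro u _
    have h1 : HasDerivAt (fun u : ℝ => (u + c)/s) (1/s) u := by
      simpa using ((hasDerivAt_id u).add_const c).div_const s
    have h2 := (Real.hasDerivAt_arctan ((u + c)/s)).comp u h1
    have h3 := h2.div_const s
    refine h3.congr_deriv (Eq.symm ?_)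
    have hd := aux_den_pos hcs hs u
    rw [div_eq_div_iff (ne_of_gt hd) hs']
    field_simp
    ring_nf
    nlinarith [hd]
  have hcont : ContinuousWithinAt (fun u => arctan ((u + c)/s) / s) (Ici (0:ℝ)) 0 := by
    apply ContinuousAt.continuousWithinAt
    exact ((Real.continuous_arctan.continuousAt).comp
      (((continuous_id.add continuous_const).div_const s).continuousAt)).div_const s
  have htend : Tendsto (fun u => arctan ((u + c)/s) / s) atTop (nhds ((π/2)/s)) := by
    have h1 : Tendsto (fun u : ℝ => (u + c)/s) atTop atTop :=
      (tendsto_atTop_add_const_right atTop c tendsto_id).atTop_div_const hs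
    exact ((Real.tendsto_arctan_atTop.mono_right nhdsWithin_le_nhds).comp h1).div_const s
  have := integral_Ioi_of_hasDerivAt_of_nonneg hcont hderiv
      (fun u hu => one_div_nonneg.mpr (aux_den_pos hcs hs u).le) htend
  rw [this]
  rw [show ((0:ℝ) + c)/s = c/s by ring_nf]
  ring




/-- The Lamperti density of parameter ν. -/
noncomputable def lampertiDensity (ν y : ℝ) : ℝ :=
  (Real.sin (Real.pi * ν) / Real.pi) * y ^ (ν - 1) /
    (y ^ (2 * ν) + 2 * y ^ ν * Real.cos (Real.pi * ν) + 1)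

/-- For ν ∈ (0,1) the Lamperti density is nonnegative on (0,∞) and integrates to 1. -/
theorem lampertiDensity_prob (ν : ℝ) (hν : ν ∈ Set.Ioo (0 : ℝ) 1) :
    (∀ y ∈ Set.Ioi (0 : ℝ), 0 ≤ lampertiDensity ν y) ∧
      ∫ y in Set.Ioi (0 : ℝ), lampertiDensity ν y = 1 := by
  obtain ⟨hν0, hν1⟩ := hν
  set c := Real.cos (π * ν) with hc
  set s := Real.sin (π * ν) with hs
  have hπν0 : 0 < π * ν := mul_pos Real.pi_pos hν0
  have hπν1 : π * ν < π := by nlinarith [Real.pi_pos]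
  have hspos : 0 < s := Real.sin_pos_of_pos_of_lt_pi hπν0 hπν1
  have hcs : c^2 + s^2 = 1 := by
    rw [hc, hs]; exact Real.cos_sq_add_sin_sq _
  have hden : ∀ u : ℝ, 0 < u^2 + 2*c*u + 1 := fun u => by
    nlinarith [sq_nonneg (u + c)]
  have hnn : ∀ y ∈ Ioi (0:ℝ), 0 ≤ lampertiDensity ν y := by
    intro y hy
    have hy' : (0:ℝ) < y := hy
    have h2 : y ^ (2*ν) = (y ^ ν)^2 := by
      rw [two_mul, Real.rpow_add hy']; ring
    have hdpos : 0 < y ^ (2*ν) + 2 * y^ν * c + 1 := by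
      rw [h2]; nlinarith [hden (y^ν)]
    apply div_nonneg _ hdpos.le
    have : 0 ≤ y ^ (ν - 1) := (Real.rpow_pos_of_pos hy' _).le
    positivity
  refine ⟨hnn, ?_⟩
  have hνne : ν ≠ 0 := ne_of_gt hν0
  have key : ∫ y in Ioi (0:ℝ), lampertiDensity ν y
      = ∫ y in Ioi (0:ℝ), (|ν| * y^(ν-1)) •
          ((fun u => (s/(π*ν)) * (1/(u^2 + 2*c*u + 1))) (y^ν)) := by
    apply setIntegral_congr_fun measurableSet_Ioi
    intro y hy
    have hy' : (0:ℝ) < y := hy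
    have h2 : y ^ (2*ν) = (y ^ ν)^2 := by
      rw [two_mul, Real.rpow_add hy']; ring
    have hd := hden (y^ν)
    simp only [lampertiDensity, smul_eq_mul, abs_of_pos hν0, h2]
    rw [div_eq_iff (by nlinarith)]
    field_simp
    have hd' : 1 + y ^ ν * c * 2 + (y ^ ν) ^ 2 ≠ 0 := by nlinarith
    rw [← hc, ← hs]
    field_simp
    linear_combination -(mul_inv_cancel₀ hd')
  rw [key, MeasureTheory.integral_comp_rpow_Ioi (fun u => (s/(π*ν)) * (1/(u^2 + 2*c*u + 1))) hνne, integral_const_mul,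
    aux_integral hcs hspos]
  have harc : arctan (c/s) = π/2 - π*ν := by
    have ht : c/s = Real.tan (π/2 - π*ν) := by
      rw [Real.tan_eq_sin_div_cos, Real.sin_pi_div_two_sub, Real.cos_pi_div_two_sub]
    rw [ht, Real.arctan_tan (by linarith) (by linarith)]
  rw [harc]
  field_simp
  ring
end

section
/- Restriction representation: for a finite Borel set S ⊂ ℝ³, define Π_S = ∑_{k=1}^{N} δ_{C_k} where C_1, C_2, … are i.i.d. uniform on S, independent of N, and N has the fractional Poisson distribution P(N = n) = (1/n!)(ρ|S|)^n (-1)^n M_ν^{(n)}(-ρ^ν|S|^ν). Then Π_S has Laplace functional E[e^{-Π_S f}] = M_ν(-ρ^ν (∫_S (1 − e^{-f(s)}) ds)^ν) for every nonnegative measurable f; hence Π_S is a Mittag-Leffler point process on S. -/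
open MeasureTheory ProbabilityTheory Set Finset

/-- The one-parameter Mittag-Leffler function `M_ν(x) = ∑ₖ xᵏ / Γ(1+νk)`. -/
noncomputable def mittagLeffler (ν x : ℝ) : ℝ :=
  ∑' k : ℕ, x ^ k / Real.Gamma (1 + ν * k)

lemma gamma_ratio_lower {ν : ℝ} (hν1 : 0 < ν) (hν2 : ν ≤ 1) {x : ℝ} (hx : 1 ≤ x) :
    x * Real.Gamma x * (x + ν) ^ (ν - 1) ≤ Real.Gamma (x + ν) := by
  have hx0 : 0 < x := lt_of_lt_of_le one_pos hx
  have hxν : 0 < x + ν := by linarith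
  rcases eq_or_lt_of_le hν2 with h1 | h1
  · subst h1
    rw [sub_self, Real.rpow_zero, mul_one, Real.Gamma_add_one (ne_of_gt hx0)]
  · -- use log-convexity
    have key : Real.Gamma (x + 1) ≤ Real.Gamma (x + ν) ^ ν * Real.Gamma (x + ν + 1) ^ (1 - ν) := by
      have := Real.Gamma_mul_add_mul_le_rpow_Gamma_mul_rpow_Gamma
        (s := x + ν) (t := x + ν + 1) (a := ν) (b := 1 - ν) hxν (by linarith) hν1
        (by linarith) (by ring)
      have harg : ν * (x + ν) + (1 - ν) * (x + ν + 1) = x + 1 := by ring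
      rwa [harg] at this
    have hG : 0 < Real.Gamma (x + ν) := Real.Gamma_pos_of_pos hxν
    have key2 : Real.Gamma (x + ν) ^ ν * Real.Gamma (x + ν + 1) ^ (1 - ν)
        = Real.Gamma (x + ν) * (x + ν) ^ (1 - ν) := by
      rw [Real.Gamma_add_one (ne_of_gt hxν), Real.mul_rpow hxν.le hG.le,
        ← mul_assoc, mul_comm (Real.Gamma (x+ν) ^ ν), mul_assoc, ← Real.rpow_add hG,
        mul_comm]
      norm_num
    rw [key2, Real.Gamma_add_one (ne_of_gt hx0)] at key
    have hc : 0 < (x + ν) ^ (1 - ν) := Real.rpow_pos_of_pos hxν _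
    have hrw : (x + ν) ^ (ν - 1) = ((x + ν) ^ (1 - ν))⁻¹ := by
      rw [← Real.rpow_neg hxν.le]; ring_nf
    rw [hrw, ← div_eq_mul_inv, div_le_iff₀ hc]
    exact key

lemma summable_aux {ν : ℝ} (hν1 : 0 < ν) (hν2 : ν ≤ 1) {A : ℝ} (hA : 0 ≤ A) :
    Summable (fun k : ℕ => (k + 1 : ℝ) * A ^ k / Real.Gamma (1 + ν * k)) := by
  have hGpos : ∀ k : ℕ, 0 < Real.Gamma (1 + ν * k) := fun k =>
    Real.Gamma_pos_of_pos (by positivity)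
  apply summable_of_ratio_norm_eventually_le (r := 1/2) (by norm_num)
  have t1 : Filter.Tendsto (fun k : ℕ => (1 : ℝ) + ν * k) Filter.atTop Filter.atTop := by
    apply Filter.tendsto_atTop_add_const_left
    exact (tendsto_natCast_atTop_atTop).const_mul_atTop hν1
  have t2 : Filter.Tendsto (fun k : ℕ => ((1 : ℝ) + ν * k) ^ ν) Filter.atTop Filter.atTop :=
    (tendsto_rpow_atTop hν1).comp t1
  filter_upwards [t2.eventually_ge_atTop (8 * (A + 1))] with k hk
  have hb : (0:ℝ) < 1 + ν * k := by positivity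
  -- Gamma growth
  have hgam : Real.Gamma (1 + ν * k) * (4 * (A + 1)) ≤ Real.Gamma (1 + ν * (k + 1)) := by
    have harg : 1 + ν * ((k : ℝ) + 1) = (1 + ν * k) + ν := by ring
    -- lower bound for (1+νk) * ((1+νk)+ν)^(ν-1)
    have hstep1 : (2 * (1 + ν * k)) ^ (ν - 1) ≤ ((1 + ν * k) + ν) ^ (ν - 1) := by
      apply Real.rpow_le_rpow_of_nonpos (by linarith) (by nlinarith [mul_nonneg hν1.le (Nat.cast_nonneg k : (0:ℝ) ≤ k)]) (by linarith)
    have hstep2 : (2 * (1 + ν * k)) ^ (ν - 1) = 2 ^ (ν - 1) * (1 + ν * k) ^ (ν - 1) :=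
      Real.mul_rpow (by norm_num) hb.le
    have hstep3 : (1/2 : ℝ) ≤ 2 ^ (ν - 1) := by
      have : (2:ℝ) ^ (-1 : ℝ) ≤ 2 ^ (ν - 1) :=
        Real.rpow_le_rpow_of_exponent_le (by norm_num) (by linarith)
      rwa [Real.rpow_neg_one, ← one_div] at this
    have hstep4 : (1 + ν * k) * (1 + ν * k) ^ (ν - 1) = (1 + ν * k) ^ ν := by
      nth_rewrite 1 [← Real.rpow_one (1 + ν * k)]
      rw [← Real.rpow_add hb]; ring_nf
    have hG := (hGpos k).le
    have hlow : 4 * (A + 1) ≤ (1 + ν * k) * ((1 + ν * k) + ν) ^ (ν - 1) := by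
      calc 4 * (A + 1) = (1/2) * (8 * (A + 1)) := by ring
        _ ≤ 2 ^ (ν - 1) * ((1 + ν * k) ^ ν) := by
            apply mul_le_mul hstep3 hk (by positivity) (by positivity)
        _ = (1 + ν * k) * (2 ^ (ν - 1) * (1 + ν * k) ^ (ν - 1)) := by
            rw [← hstep4]; ring
        _ ≤ (1 + ν * k) * ((1 + ν * k) + ν) ^ (ν - 1) := by
            apply mul_le_mul_of_nonneg_left _ hb.le
            rw [← hstep2]; exact hstep1
    calc Real.Gamma (1 + ν * k) * (4 * (A + 1))
        ≤ Real.Gamma (1 + ν * k) * ((1 + ν * k) * ((1 + ν * k) + ν) ^ (ν - 1)) :=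
          mul_le_mul_of_nonneg_left hlow hG
      _ = (1 + ν * k) * Real.Gamma (1 + ν * k) * ((1 + ν * k) + ν) ^ (ν - 1) := by ring
      _ ≤ Real.Gamma ((1 + ν * k) + ν) := gamma_ratio_lower hν1 hν2 (le_add_of_nonneg_right (by positivity))
      _ = Real.Gamma (1 + ν * (k + 1)) := by rw [harg]
  -- now the ratio estimate
  have hGk := hGpos k
  have hGk1 : (0:ℝ) < Real.Gamma (1 + ν * (k + 1)) := by
    have := hGpos (k + 1); rwa [Nat.cast_add, Nat.cast_one] at this
  have hk1 : ((k:ℝ) + 1 + 1) * A ^ (k + 1) / Real.Gamma (1 + ν * (k + 1))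
      ≤ 1 / 2 * ((k + 1 : ℝ) * A ^ k / Real.Gamma (1 + ν * k)) := by
    rw [mul_div_assoc' (1/2 : ℝ), div_le_div_iff₀ hGk1 hGk]
    have hAk : (0:ℝ) ≤ A ^ k := pow_nonneg hA k
    have hmul : 1 / 2 * ((k + 1 : ℝ) * A ^ k) * (Real.Gamma (1 + ν * k) * (4 * (A + 1)))
        ≤ 1 / 2 * ((k + 1 : ℝ) * A ^ k) * Real.Gamma (1 + ν * (k + 1)) := by
      apply mul_le_mul_of_nonneg_left hgam (by positivity)
    calc ((k:ℝ) + 1 + 1) * A ^ (k + 1) * Real.Gamma (1 + ν * k)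
        ≤ 1 / 2 * ((k + 1 : ℝ) * A ^ k) * (Real.Gamma (1 + ν * k) * (4 * (A + 1))) := by
          rw [pow_succ]
          nlinarith [mul_nonneg hAk hGk.le, mul_nonneg (mul_nonneg hAk hGk.le) hA,
            mul_nonneg (mul_nonneg (Nat.cast_nonneg k : (0:ℝ) ≤ k) hAk) hGk.le,
            mul_nonneg (mul_nonneg (mul_nonneg (Nat.cast_nonneg k : (0:ℝ) ≤ k) hAk) hGk.le) hA]
      _ ≤ 1 / 2 * ((k + 1 : ℝ) * A ^ k) * Real.Gamma (1 + ν * (k + 1)) := hmul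
  -- translate to norms
  have e1 : ‖((k:ℕ) + 1 + 1 : ℝ) * A ^ (k + 1) / Real.Gamma (1 + ν * ((k:ℕ) + 1))‖
      = ((k:ℝ) + 1 + 1) * A ^ (k + 1) / Real.Gamma (1 + ν * (k + 1)) := by
    rw [Real.norm_eq_abs, abs_of_nonneg (by positivity)]
  have e2 : ‖((k:ℝ) + 1) * A ^ k / Real.Gamma (1 + ν * k)‖
      = ((k:ℝ) + 1) * A ^ k / Real.Gamma (1 + ν * k) := by
    rw [Real.norm_eq_abs, abs_of_nonneg (by positivity)]
  push_cast
  push_cast at e1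
  rw [e1, e2]
  exact hk1

lemma taylor_hasSum {ν x p : ℝ} (hν1 : 0 < ν) (hν2 : ν ≤ 1) (hx : 0 < x)
    (hp0 : 0 ≤ p) (hp1 : p < 1) :
    HasSum (fun n : ℕ => ((n.factorial : ℝ))⁻¹ * (-(x * p)) ^ n *
        iteratedDeriv n (fun t : ℝ => mittagLeffler ν (-(t ^ ν))) x)
      (mittagLeffler ν (-((x * (1 - p)) ^ ν))) := by
  set gR : ℝ → ℝ := fun t => mittagLeffler ν (-(t ^ ν)) with hgR
  set r : ℝ := x * (1 + p) / 2 with hr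
  have hr0 : 0 < r := by rw [hr]; positivity
  have hrx : r < x := by rw [hr]; nlinarith
  have hδ0 : 0 < x - r := by linarith
  set A : ℝ := (max (x + r) 1) ^ ν with hA
  have hA1 : 1 ≤ A := by
    rw [hA]
    calc (1:ℝ) = 1 ^ ν := (Real.one_rpow ν).symm
      _ ≤ _ := Real.rpow_le_rpow zero_le_one (le_max_right _ _) hν1.le
  have hA0 : 0 ≤ A := le_trans zero_le_one hA1
  have hGpos : ∀ k : ℕ, 0 < Real.Gamma (1 + ν * k) := fun k =>
    Real.Gamma_pos_of_pos (by positivity)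
  set g : ℕ → ℂ → ℂ := fun k w => (-(w ^ (ν:ℂ))) ^ k / ((Real.Gamma (1 + ν * k) : ℝ) : ℂ)
    with hg
  set g' : ℕ → ℂ → ℂ := fun k w =>
    ((k:ℂ) * (-(w ^ (ν:ℂ))) ^ (k - 1) * (-((ν:ℂ) * w ^ ((ν:ℂ) - 1))))
      / ((Real.Gamma (1 + ν * k) : ℝ) : ℂ) with hg'
  set u : ℕ → ℝ := fun k => (ν * A / (x - r)) * ((k + 1 : ℝ) * A ^ k / Real.Gamma (1 + ν * k))
    with hu'
  have hu : Summable u := (summable_aux hν1 hν2 hA0).mul_left _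
  -- basic facts about points of the ball
  have hball : ∀ w : ℂ, w ∈ Metric.ball (x:ℂ) r →
      x - r ≤ w.re ∧ ‖w‖ ≤ x + r ∧ x - r ≤ ‖w‖ ∧ w ∈ Complex.slitPlane := by
    intro w hw
    rw [Metric.mem_ball, Complex.dist_eq] at hw
    have h1 : |(w - (x:ℂ)).re| ≤ ‖w - (x:ℂ)‖ := Complex.abs_re_le_norm _
    have h2 : (w - (x:ℂ)).re = w.re - x := by simp [Complex.sub_re]
    have hre : x - r ≤ w.re := by
      rw [h2] at h1
      have := abs_le.mp h1
      linarith [this.1, hw.le]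
    refine ⟨hre, ?_, ?_, ?_⟩
    · calc ‖w‖ = ‖(x:ℂ) + (w - (x:ℂ))‖ := by ring_nf
        _ ≤ ‖(x:ℂ)‖ + ‖w - (x:ℂ)‖ := norm_add_le _ _
        _ ≤ x + r := by
            rw [Complex.norm_real, Real.norm_eq_abs, abs_of_pos hx]; linarith [hw.le]
    · exact le_trans hre (Complex.re_le_norm w)
    · exact Complex.mem_slitPlane_iff.mpr (Or.inl (lt_of_lt_of_le hδ0 hre))
  have hder : ∀ (k : ℕ) (w : ℂ), w ∈ Metric.ball (x:ℂ) r → HasDerivAt (g k) (g' k w) w := by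
    intro k w hw
    have hslit := (hball w hw).2.2.2
    have h1 : HasDerivAt (fun z : ℂ => z ^ (ν:ℂ)) ((ν:ℂ) * w ^ ((ν:ℂ) - 1)) w :=
      (Complex.hasStrictDerivAt_cpow_const hslit).hasDerivAt
    exact (h1.neg.pow k).div_const _
  have habs_cpow : ∀ (w : ℂ) (c : ℝ), ‖w ^ (c:ℂ)‖ = ‖w‖ ^ c := fun w c =>
    Complex.norm_cpow_real w c
  have hbound : ∀ (k : ℕ) (w : ℂ), w ∈ Metric.ball (x:ℂ) r → ‖g' k w‖ ≤ u k := by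
    intro k w hw
    obtain ⟨_, habs, hlow, _⟩ := hball w hw
    have hw0 : 0 < ‖w‖ := lt_of_lt_of_le hδ0 hlow
    have hnorm : ‖g' k w‖ = k * (‖w‖ ^ ν) ^ (k - 1) * (ν * ‖w‖ ^ (ν - 1))
        / Real.Gamma (1 + ν * k) := by
      have e1 : ((ν:ℂ) - 1) = (((ν - 1 : ℝ)):ℂ) := by push_cast; ring
      rw [hg']
      simp only [norm_div, norm_mul, norm_pow, norm_neg,
        Complex.norm_natCast, Complex.norm_real, Real.norm_eq_abs, e1, habs_cpow]
      rw [abs_of_pos hν1, abs_of_pos (hGpos k)]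
    rw [hnorm, hu']
    have hwA : ‖w‖ ^ ν ≤ A := by
      rw [hA]
      exact Real.rpow_le_rpow hw0.le (le_trans habs (le_max_left _ _)) hν1.le
    have hb1 : (‖w‖ ^ ν) ^ (k - 1) ≤ A ^ k :=
      le_trans (pow_le_pow_left₀ (Real.rpow_nonneg hw0.le _) hwA _)
        (pow_le_pow_right₀ hA1 (Nat.sub_le k 1))
    have hb2 : ‖w‖ ^ (ν - 1) ≤ A / (x - r) := by
      rw [Real.rpow_sub hw0, Real.rpow_one]
      exact div_le_div₀ hA0 hwA hδ0 hlow
    calc (k:ℝ) * (‖w‖ ^ ν) ^ (k - 1) * (ν * ‖w‖ ^ (ν - 1))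
          / Real.Gamma (1 + ν * k)
        ≤ (k:ℝ) * A ^ k * (ν * (A / (x - r))) / Real.Gamma (1 + ν * k) := by
          gcongr <;> first
            | exact mul_nonneg (Nat.cast_nonneg k) (pow_nonneg (Real.rpow_nonneg hw0.le _) _)
            | exact Real.rpow_nonneg hw0.le _
            | exact hb1
            | exact hb2
            | positivity
      _ = (ν * A / (x - r)) * ((k:ℝ) * A ^ k / Real.Gamma (1 + ν * k)) := by
          field_simp
      _ ≤ (ν * A / (x - r)) * ((k + 1 : ℝ) * A ^ k / Real.Gamma (1 + ν * k)) := by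
          gcongr <;> first | positivity | linarith
  have hsum0 : Summable (fun k => g k (x:ℂ)) := by
    apply Summable.of_norm_bounded (summable_aux hν1 hν2 hA0)
    intro k
    have : ‖g k (x:ℂ)‖ = (x ^ ν) ^ k / Real.Gamma (1 + ν * k) := by
      rw [hg]
      simp only [norm_div, norm_pow, norm_neg, Complex.norm_real, Real.norm_eq_abs,
        habs_cpow]
      rw [abs_of_pos hx, abs_of_pos (hGpos k)]
    rw [this]
    have hxA : x ^ ν ≤ A := by
      rw [hA]
      exact Real.rpow_le_rpow hx.le (le_trans (by linarith) (le_max_left _ _)) hν1.le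
    have h1 : (x ^ ν) ^ k ≤ (k + 1 : ℝ) * A ^ k := by
      nlinarith [pow_le_pow_left₀ (Real.rpow_nonneg hx.le ν) hxA k,
        pow_nonneg (Real.rpow_nonneg hx.le ν) k, pow_nonneg hA0 k]
    gcongr
  set H : ℂ → ℂ := fun z => ∑' k, g k z with hH
  have hx_ball : (x:ℂ) ∈ Metric.ball (x:ℂ) r := Metric.mem_ball_self hr0
  have hHder : ∀ w ∈ Metric.ball (x:ℂ) r, HasDerivAt H (∑' k, g' k w) w := fun w hw =>
    hasDerivAt_tsum_of_isPreconnected hu Metric.isOpen_ball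
      (convex_ball _ _).isPreconnected hder hbound hx_ball hsum0 hw
  have hdiff : DifferentiableOn ℂ H (Metric.ball (x:ℂ) r) := fun w hw =>
    ((hHder w hw).differentiableAt).differentiableWithinAt
  have hreal : ∀ y : ℝ, 0 < y → H (y:ℂ) = ((gR y : ℝ) : ℂ) := by
    intro y hy
    have hterm : ∀ k : ℕ, g k (y:ℂ) = (((-(y ^ ν)) ^ k / Real.Gamma (1 + ν * k) : ℝ) : ℂ) := by
      intro k
      rw [hg]
      simp only
      rw [← Complex.ofReal_cpow hy.le]
      push_cast
      ring
    rw [hH]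
    simp only
    rw [tsum_congr hterm, ← Complex.ofReal_tsum]
    norm_cast
  have hAn : ∀ n, AnalyticOnNhd ℂ (iteratedDeriv n H) (Metric.ball (x:ℂ) r) := by
    intro n
    induction n with
    | zero =>
        simpa [iteratedDeriv_zero] using hdiff.analyticOnNhd Metric.isOpen_ball
    | succ n ih =>
        rw [iteratedDeriv_succ]; exact ih.deriv
  have hmem : ∀ y : ℝ, y ∈ Set.Ioo (x - r) (x + r) → (y:ℂ) ∈ Metric.ball (x:ℂ) r := by
    intro y hy
    rw [Metric.mem_ball, Complex.dist_eq, ← Complex.ofReal_sub, Complex.norm_real, Real.norm_eq_abs]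
    rw [abs_lt]
    exact ⟨by linarith [hy.1], by linarith [hy.2]⟩
  have htrans : ∀ (n : ℕ), ∀ y : ℝ, y ∈ Set.Ioo (x - r) (x + r) →
      iteratedDeriv n gR y = (iteratedDeriv n H (y:ℂ)).re := by
    intro n
    induction n with
    | zero =>
        intro y hy
        simp only [iteratedDeriv_zero]
        rw [hreal y (lt_trans hδ0 hy.1)]
        simp
    | succ n ih =>
        intro y hy
        rw [iteratedDeriv_succ, iteratedDeriv_succ]
        have hev : iteratedDeriv n gR =ᶠ[nhds y]
            (fun t : ℝ => (iteratedDeriv n H (t:ℂ)).re) := by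
          filter_upwards [Ioo_mem_nhds hy.1 hy.2] with t ht using ih t ht
        rw [hev.deriv_eq]
        have hda : HasDerivAt (iteratedDeriv n H) (deriv (iteratedDeriv n H) (y:ℂ)) (y:ℂ) :=
          ((hAn n) (y:ℂ) (hmem y hy)).differentiableAt.hasDerivAt
        exact hda.real_of_complex.deriv
  have hx_mem : x ∈ Set.Ioo (x - r) (x + r) := ⟨by linarith, by linarith⟩
  have hz_mem : x * (1 - p) ∈ Set.Ioo (x - r) (x + r) := by
    constructor
    · rw [hr]; nlinarith
    · nlinarith
  have hz : ((x * (1 - p) : ℝ) : ℂ) ∈ Metric.ball (x:ℂ) r := hmem _ hz_mem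
  have hT := Complex.hasSum_taylorSeries_on_ball hdiff hz
  have hTre := Complex.hasSum_re hT
  have hval : (H ((x * (1 - p) : ℝ) : ℂ)).re = mittagLeffler ν (-((x * (1 - p)) ^ ν)) := by
    rw [hreal _ (by nlinarith)]
    simp [hgR]
  have hterm : (fun n : ℕ => (((n.factorial : ℂ))⁻¹ • (((x * (1 - p) : ℝ) : ℂ) - (x:ℂ)) ^ n •
      iteratedDeriv n H (x:ℂ)).re)
      = fun n : ℕ => ((n.factorial : ℝ))⁻¹ * (-(x * p)) ^ n * iteratedDeriv n gR x := by
    funext n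
    have h1 : (((x * (1 - p) : ℝ) : ℂ) - (x:ℂ)) = ((-(x * p) : ℝ) : ℂ) := by push_cast; ring
    rw [h1, smul_eq_mul, smul_eq_mul]
    have h2 : ((n.factorial : ℂ))⁻¹ * (((-(x * p) : ℝ) : ℂ) ^ n * iteratedDeriv n H (x:ℂ))
        = ((((n.factorial : ℝ))⁻¹ * (-(x * p)) ^ n : ℝ) : ℂ) * iteratedDeriv n H (x:ℂ) := by
      push_cast
      ring
    rw [h2, Complex.re_ofReal_mul, ← htrans n x hx_mem]
  rw [hterm, hval] at hTre
  exact hTre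

/-- Type copy of `α` carrying `μ` as its volume. -/
def MeasureSpaceCopy (α : Type*) [MeasurableSpace α] (_μ : Measure α) : Type _ := α

instance {α : Type*} [m : MeasurableSpace α] (μ : Measure α) :
    MeasurableSpace (MeasureSpaceCopy α μ) := m

noncomputable instance {α : Type*} [MeasurableSpace α] (μ : Measure α) :
    MeasureSpace (MeasureSpaceCopy α μ) := ⟨μ⟩

instance {α : Type*} [MeasurableSpace α] (μ : Measure α) [IsFiniteMeasure μ] :
    SigmaFinite (volume : Measure (MeasureSpaceCopy α μ)) := by
  change SigmaFinite μ
  infer_instance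

lemma integral_pi_pow {α : Type*} [MeasurableSpace α] (μ : Measure α) [IsFiniteMeasure μ]
    (n : ℕ) (φ : α → ℝ) :
    ∫ y : Fin n → α, ∏ i, φ (y i) ∂(Measure.pi fun _ : Fin n => μ) = (∫ x, φ x ∂μ) ^ n := by
  have h := MeasureTheory.integral_fintype_prod_eq_pow (ι := Fin n) φ (μ := μ)
  rw [Fintype.card_fin] at h
  exact h

set_option maxHeartbeats 1000000 in
/-- Restriction representation: if `N` has the fractional Poisson distribution
`P(N = n) = (1/n!)(ρ|S|)ⁿ(-1)ⁿ M_ν^{(n)}(-ρ^ν|S|^ν)` and, given `N = n`, the points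
`C₁,…,Cₙ` are i.i.d. uniform on `S` (independent of `N`), then the point process
`Π_S = ∑_{k=1}^N δ_{C_k}` has Laplace functional
`E[e^{-Π_S f}] = M_ν(-ρ^ν (∫_S (1-e^{-f}))^ν)` for every nonnegative measurable `f`. -/
theorem fractional_poisson_restriction_laplace_functional
    {Ω : Type*} [MeasureSpace Ω] [IsProbabilityMeasure (ℙ : Measure Ω)]
    (ν ρ : ℝ) (hν : ν ∈ Set.Ioc (0 : ℝ) 1) (hρ : 0 < ρ)
    (S : Set (EuclideanSpace ℝ (Fin 3))) (hS : MeasurableSet S)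
    (hSfin : MeasureTheory.volume S ≠ ⊤) (hSpos : MeasureTheory.volume S ≠ 0)
    (N : Ω → ℕ) (hNmeas : Measurable N)
    (C : ℕ → Ω → EuclideanSpace ℝ (Fin 3)) (hCmeas : ∀ i, Measurable (C i))
    (hN : ∀ n : ℕ, (ℙ {ω | N ω = n}).toReal =
      (1 / n.factorial) * (ρ * (MeasureTheory.volume S).toReal) ^ n * (-1 : ℝ) ^ n *
        iteratedDeriv n (fun z => mittagLeffler ν (-(z ^ ν)))
          (ρ * (MeasureTheory.volume S).toReal))
    (hjoint : ∀ (n : ℕ) (A : Fin n → Set (EuclideanSpace ℝ (Fin 3))),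
      (∀ i, MeasurableSet (A i)) →
      (ℙ {ω | N ω = n ∧ ∀ i : Fin n, C i ω ∈ A i}).toReal =
        (ℙ {ω | N ω = n}).toReal *
          ∏ i, ((MeasureTheory.volume (A i ∩ S)).toReal /
            (MeasureTheory.volume S).toReal)) :
    ∀ f : EuclideanSpace ℝ (Fin 3) → ℝ, Measurable f → (∀ x, 0 ≤ f x) →
      ∫ ω, Real.exp (-(∑ k ∈ Finset.range (N ω), f (C k ω))) ∂ℙ =
        mittagLeffler ν (-(ρ ^ ν * (∫ x in S, (1 - Real.exp (-(f x)))) ^ ν)) := by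
  intro f hf hf0
  classical
  have hvolS_pos : 0 < (MeasureTheory.volume S).toReal := ENNReal.toReal_pos hSpos hSfin
  set volS : ENNReal := MeasureTheory.volume S with hvolS
  set μ : Measure (EuclideanSpace ℝ (Fin 3)) :=
    volS⁻¹ • (MeasureTheory.volume : Measure (EuclideanSpace ℝ (Fin 3))).restrict S with hμ
  haveI hμprob : IsProbabilityMeasure μ := by
    constructor
    rw [hμ, Measure.smul_apply, Measure.restrict_apply_univ, smul_eq_mul,
      ENNReal.inv_mul_cancel hSpos hSfin]
  haveI : IsFiniteMeasure
      ((MeasureTheory.volume : Measure (EuclideanSpace ℝ (Fin 3))).restrict S) := by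
    constructor
    rw [Measure.restrict_apply_univ]
    exact hSfin.lt_top
  have hexp_meas : Measurable fun a : EuclideanSpace ℝ (Fin 3) => Real.exp (-(f a)) :=
    Real.measurable_exp.comp hf.neg
  have hexp_le : ∀ a, Real.exp (-(f a)) ≤ 1 := fun a =>
    Real.exp_le_one_iff.mpr (neg_nonpos.mpr (hf0 a))
  have hexp_int : IntegrableOn (fun a => Real.exp (-(f a))) S MeasureTheory.volume := by
    apply Integrable.mono' (integrable_const (1:ℝ)) hexp_meas.aestronglyMeasurable
    refine Filter.Eventually.of_forall fun a => ?_
    rw [Real.norm_eq_abs, abs_of_pos (Real.exp_pos _)]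
    exact hexp_le a
  set p : ℝ := (volS.toReal)⁻¹ * ∫ a in S, Real.exp (-(f a)) with hp
  have hint_nonneg : 0 ≤ ∫ a in S, Real.exp (-(f a)) :=
    integral_nonneg fun a => (Real.exp_pos _).le
  have hp0 : 0 ≤ p := by
    rw [hp]; positivity
  have hint_le : ∫ a in S, Real.exp (-(f a)) ≤ volS.toReal := by
    have h1 := integral_mono hexp_int (integrable_const (1:ℝ)) hexp_le
    simpa [Measure.restrict_apply_univ, measureReal_def] using h1
  have hp1 : p ≤ 1 := by
    rw [hp]
    calc (volS.toReal)⁻¹ * ∫ a in S, Real.exp (-(f a))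
        ≤ (volS.toReal)⁻¹ * volS.toReal :=
          mul_le_mul_of_nonneg_left hint_le (by positivity)
      _ = 1 := inv_mul_cancel₀ (ne_of_gt hvolS_pos)
  have hT : ∫ a in S, (1 - Real.exp (-(f a))) = volS.toReal * (1 - p) := by
    rw [integral_sub (integrable_const 1) hexp_int]
    have h2 : volS.toReal * ((volS.toReal)⁻¹ * ∫ a in S, Real.exp (-(f a)))
        = ∫ a in S, Real.exp (-(f a)) := by
      rw [← mul_assoc, mul_inv_cancel₀ (ne_of_gt hvolS_pos), one_mul]
    rw [hp, mul_sub, mul_one, h2]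
    simp [Measure.restrict_apply_univ, measureReal_def, hvolS]
  -- measurability and integrability of the integrand
  set G : ℕ → Ω → ℝ := fun n ω => Real.exp (-(∑ k ∈ Finset.range n, f (C k ω))) with hG
  have hGmeas : ∀ n, Measurable (G n) := fun n =>
    Real.measurable_exp.comp
      (Measurable.neg (Finset.measurable_sum _ fun k _ => hf.comp (hCmeas k)))
  set F : Ω → ℝ := fun ω => Real.exp (-(∑ k ∈ Finset.range (N ω), f (C k ω))) with hF
  have hFmeas : Measurable F := by
    rw [hF]
    have h1 : Measurable fun q : Ω × ℕ => G q.2 q.1 :=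
      measurable_from_prod_countable_left fun n => hGmeas n
    have h2 : (fun ω => Real.exp (-(∑ k ∈ Finset.range (N ω), f (C k ω))))
        = (fun q : Ω × ℕ => G q.2 q.1) ∘ (fun ω => (ω, N ω)) := rfl
    rw [h2]
    exact h1.comp (measurable_id.prodMk hNmeas)
  have hFint : Integrable F ℙ := by
    apply Integrable.mono' (integrable_const (1:ℝ)) hFmeas.aestronglyMeasurable
    refine Filter.Eventually.of_forall fun ω => ?_
    rw [Real.norm_eq_abs, abs_of_pos (Real.exp_pos _)]
    exact Real.exp_le_one_iff.mpr (neg_nonpos.mpr (Finset.sum_nonneg fun k _ => hf0 _))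
  -- the partition by values of N
  set s : ℕ → Set Ω := fun n => {ω | N ω = n} with hs
  have hsm : ∀ n, MeasurableSet (s n) := fun n => hNmeas (measurableSet_singleton n)
  have hsd : Pairwise (Function.onFun Disjoint s) := by
    intro m n hmn
    rw [Function.onFun, Set.disjoint_left]
    rintro ω h1 h2
    exact hmn ((h1 : N ω = m).symm.trans h2)
  have hsU : (⋃ n, s n) = Set.univ := by
    ext ω; simp [hs]
  have hsplit : ∫ ω, F ω ∂ℙ = ∑' n, ∫ ω in s n, F ω ∂ℙ := by
    have h1 := integral_iUnion hsm hsd (hFint.integrableOn (s := ⋃ n, s n))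
    rw [hsU, Measure.restrict_univ] at h1
    exact h1
  -- per-n evaluation
  have hkey : ∀ n : ℕ, ∫ ω in s n, F ω ∂ℙ = (ℙ (s n)).toReal * p ^ n := by
    intro n
    have h1 : ∫ ω in s n, F ω ∂ℙ = ∫ ω in s n, G n ω ∂ℙ := by
      apply setIntegral_congr_fun (hsm n)
      intro ω hω
      simp only [hF, hG]
      rw [(hω : N ω = n)]
    have h2 : ∀ ω, G n ω = ∏ i : Fin n, Real.exp (-(f (C i ω))) := by
      intro ω
      rw [hG]
      simp only
      rw [← Finset.sum_neg_distrib, Real.exp_sum, Finset.prod_range]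
    set π : Ω → (Fin n → EuclideanSpace ℝ (Fin 3)) := fun ω i => C i ω with hπ
    have hπm : Measurable π := measurable_pi_lambda _ fun i => hCmeas i
    have hprodmeas : Measurable fun y : Fin n → EuclideanSpace ℝ (Fin 3) =>
        ∏ i : Fin n, Real.exp (-(f (y i))) :=
      Finset.measurable_prod _ fun i _ => hexp_meas.comp (measurable_pi_apply i)
    have hQ : Measure.map π ((ℙ : Measure Ω).restrict (s n)) = (ℙ (s n)) • Measure.pi (fun _ : Fin n => μ) := by
      by_cases hc : ℙ (s n) = 0
      · rw [hc, zero_smul, Measure.restrict_eq_zero.mpr hc, Measure.map_zero]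
      · have hc' : ℙ (s n) ≠ ⊤ := measure_ne_top _ _
        have hpib : ∀ A : Fin n → Set (EuclideanSpace ℝ (Fin 3)), (∀ i, MeasurableSet (A i)) →
            Measure.map π ((ℙ : Measure Ω).restrict (s n)) (Set.pi Set.univ A)
              = ℙ (s n) * ∏ i, μ (A i) := by
          intro A hA
          rw [Measure.map_apply hπm (MeasurableSet.univ_pi hA),
            Measure.restrict_apply (hπm (MeasurableSet.univ_pi hA))]
          have hset : π ⁻¹' (Set.pi Set.univ A) ∩ s n
              = {ω | N ω = n ∧ ∀ i : Fin n, C i ω ∈ A i} := by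
            ext ω
            simp only [hπ, hs, Set.mem_inter_iff, Set.mem_preimage, Set.mem_pi, Set.mem_univ,
              true_implies, Set.mem_setOf_eq]
            exact and_comm
          rw [hset]
          have hμA : ∀ i, μ (A i) = volS⁻¹ * MeasureTheory.volume (A i ∩ S) := fun i => by
            rw [hμ, Measure.smul_apply, Measure.restrict_apply (hA i), smul_eq_mul]
          have hfin1 : ℙ {ω | N ω = n ∧ ∀ i : Fin n, C i ω ∈ A i} ≠ ⊤ := measure_ne_top _ _
          have hfin2 : ℙ (s n) * ∏ i, μ (A i) ≠ ⊤ := by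
            apply ENNReal.mul_ne_top (measure_ne_top _ _)
            exact (ENNReal.prod_lt_top fun i _ => measure_lt_top μ _).ne
          apply (ENNReal.toReal_eq_toReal_iff' hfin1 hfin2).mp
          rw [hjoint n A hA, ENNReal.toReal_mul, ENNReal.toReal_prod]
          congr 1
          refine Finset.prod_congr rfl fun i _ => ?_
          rw [hμA i, ENNReal.toReal_mul, ENNReal.toReal_inv, div_eq_mul_inv, mul_comm]
        have hpi := Measure.pi_eq (μ := fun _ : Fin n => μ)
          (μ' := (ℙ (s n))⁻¹ • Measure.map π ((ℙ : Measure Ω).restrict (s n)))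
          (fun A hA => by
            rw [Measure.smul_apply, hpib A hA, smul_eq_mul, ← mul_assoc,
              ENNReal.inv_mul_cancel hc hc', one_mul])
        calc Measure.map π ((ℙ : Measure Ω).restrict (s n))
            = (ℙ (s n)) • ((ℙ (s n))⁻¹ • Measure.map π ((ℙ : Measure Ω).restrict (s n))) := by
              rw [smul_smul, ENNReal.mul_inv_cancel hc hc', one_smul]
          _ = (ℙ (s n)) • Measure.pi (fun _ : Fin n => μ) := by rw [← hpi]
    have hμint : ∫ a, Real.exp (-(f a)) ∂μ = p := by
      rw [hμ, integral_smul_measure, hp, ENNReal.toReal_inv, smul_eq_mul]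
    calc ∫ ω in s n, F ω ∂ℙ
        = ∫ ω, (∏ i : Fin n, Real.exp (-(f (π ω i)))) ∂((ℙ : Measure Ω).restrict (s n)) := by
          rw [h1]
          exact integral_congr_ae (Filter.Eventually.of_forall fun ω => h2 ω)
      _ = ∫ y, (∏ i : Fin n, Real.exp (-(f (y i))))
            ∂(Measure.map π ((ℙ : Measure Ω).restrict (s n))) :=
          (integral_map hπm.aemeasurable hprodmeas.aestronglyMeasurable).symm
      _ = (ℙ (s n)).toReal * ∫ y, (∏ i : Fin n, Real.exp (-(f (y i))))
            ∂(Measure.pi fun _ : Fin n => μ) := by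
          rw [hQ, integral_smul_measure, smul_eq_mul]
      _ = (ℙ (s n)).toReal * (∫ a, Real.exp (-(f a)) ∂μ) ^ n := by
          rw [integral_pi_pow μ n (fun a => Real.exp (-(f a)))]
      _ = (ℙ (s n)).toReal * p ^ n := by rw [hμint]
  -- put everything together
  rw [hsplit, tsum_congr hkey, hT]
  by_cases hcase : p = 1
  · rw [hcase]
    simp only [one_pow, mul_one, sub_self, mul_zero]
    rw [Real.zero_rpow (ne_of_gt hν.1), mul_zero, neg_zero]
    have hsum : ∑' n, ℙ (s n) = 1 := by
      rw [← measure_iUnion hsd hsm, hsU, measure_univ]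
    have hsum' : ∑' n, (ℙ (s n)).toReal = 1 := by
      rw [← ENNReal.tsum_toReal_eq fun n => measure_ne_top _ _, hsum, ENNReal.toReal_one]
    rw [hsum', mittagLeffler]
    rw [tsum_eq_single 0 (fun k hk => by rw [zero_pow hk, zero_div])]
    norm_num [Real.Gamma_one]
  · have hplt : p < 1 := lt_of_le_of_ne hp1 hcase
    have hx : 0 < ρ * volS.toReal := by positivity
    have hHS := taylor_hasSum hν.1 hν.2 hx hp0 hplt
    have hrpow : ((ρ * volS.toReal) * (1 - p)) ^ ν = ρ ^ ν * (volS.toReal * (1 - p)) ^ ν := by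
      rw [mul_assoc, Real.mul_rpow hρ.le (by nlinarith)]
    rw [hrpow] at hHS
    have hterm : ∀ n : ℕ, (ℙ (s n)).toReal * p ^ n
        = ((n.factorial : ℝ))⁻¹ * (-((ρ * volS.toReal) * p)) ^ n *
          iteratedDeriv n (fun t : ℝ => mittagLeffler ν (-(t ^ ν))) (ρ * volS.toReal) := by
      intro n
      rw [show ℙ (s n) = ℙ {ω | N ω = n} from rfl, hN n, neg_pow, mul_pow]
      ring
    rw [tsum_congr hterm]
    exact hHS.tsum_eq
end

section
/- Equality in distribution for Model 1: the non-Markovian random flight (X^ν_{(1)}(t), V^ν_{(1)}(t)) with Schur-constant Mittag-Leffler flight times equals in distribution, for each fixed t, the Markovian random flight (X^{(c, λL)}_t, V^{(c, λL)}_t) with the rate parameter randomized by an independent Lamperti variable L of parameter ν. Equivalently, (J_1^{(ν)}, …, J_n^{(ν)}) =_d (J_1/L, …, J_n/L) with {J_k} i.i.d. Exp(λ) independent of L. -/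
open MeasureTheory ProbabilityTheory Set

private lemma survival_div_eq {Ω' : Type*} [MeasureSpace Ω']
    [IsProbabilityMeasure (ℙ : Measure Ω')]
    (lam : ℝ) (hlam : 0 < lam)
    (J : ℕ → Ω' → ℝ) (hJmeas : ∀ i, Measurable (J i))
    (hJindep : iIndepFun J ℙ)
    (hJexp : ∀ (i : ℕ) (s : ℝ), 0 ≤ s →
      (ℙ {ω | s < J i ω}).toReal = Real.exp (-(lam * s)))
    (L : Ω' → ℝ) (hLmeas : Measurable L) (hLpos : ∀ ω, 0 < L ω)
    (hindep : IndepFun (fun ω => fun i => J i ω) L ℙ)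
    (n : ℕ) (s : Fin n → ℝ) (hs : ∀ k, 0 ≤ s k) :
    ℙ {ω | ∀ k : Fin n, s k * L ω < J k ω}
      = ENNReal.ofReal (∫ ω, Real.exp (-(lam * (∑ k, s k) * L ω)) ∂ℙ) := by
  set T := ∑ k, s k with hTdef
  have hT : 0 ≤ T := Finset.sum_nonneg fun k _ => hs k
  have hc : 0 ≤ lam * T := mul_nonneg hlam.le hT
  have hvec : Measurable (fun ω : Ω' => fun i : ℕ => J i ω) :=
    measurable_pi_lambda _ hJmeas
  haveI : IsProbabilityMeasure (Measure.map (fun ω : Ω' => fun i : ℕ => J i ω) ℙ) :=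
    Measure.isProbabilityMeasure_map hvec.aemeasurable
  haveI : IsProbabilityMeasure (Measure.map L ℙ) :=
    Measure.isProbabilityMeasure_map hLmeas.aemeasurable
  have hmap : Measure.map (fun ω => (L ω, fun i : ℕ => J i ω)) ℙ
      = (Measure.map L ℙ).prod (Measure.map (fun ω : Ω' => fun i : ℕ => J i ω) ℙ) :=
    (indepFun_iff_map_prod_eq_prod_map_map hLmeas.aemeasurable hvec.aemeasurable).mp
      hindep.symm
  set S : Set (ℝ × (ℕ → ℝ)) := {p | ∀ k : Fin n, s k * p.1 < p.2 k} with hSdef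
  have hSm : MeasurableSet S := by
    have hS2 : S = ⋂ k : Fin n, {p : ℝ × (ℕ → ℝ) | s k * p.1 < p.2 (k : ℕ)} := by
      ext p; simp [hSdef]
    rw [hS2]
    exact MeasurableSet.iInter fun k =>
      measurableSet_lt (measurable_fst.const_mul _)
        ((measurable_pi_apply _).comp measurable_snd)
  have key : {ω | ∀ k : Fin n, s k * L ω < J k ω}
      = (fun ω => (L ω, fun i : ℕ => J i ω)) ⁻¹' S := rfl
  rw [key, ← Measure.map_apply (hLmeas.prodMk hvec) hSm, hmap, Measure.prod_apply hSm]
  -- inner evaluation for positive l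
  have hinner : ∀ l : ℝ, 0 < l →
      (Measure.map (fun ω : Ω' => fun i : ℕ => J i ω) ℙ) (Prod.mk l ⁻¹' S)
        = ENNReal.ofReal (Real.exp (-(lam * T * l))) := by
    intro l hl
    have hpre : Prod.mk l ⁻¹' S = {j : ℕ → ℝ | ∀ k : Fin n, s k * l < j (k : ℕ)} := rfl
    have hpm : MeasurableSet {j : ℕ → ℝ | ∀ k : Fin n, s k * l < j (k : ℕ)} := by
      have h2 : {j : ℕ → ℝ | ∀ k : Fin n, s k * l < j (k : ℕ)}
          = ⋂ k : Fin n, {j : ℕ → ℝ | s k * l < j (k : ℕ)} := by ext; simp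
      rw [h2]
      exact MeasurableSet.iInter fun k =>
        measurableSet_lt measurable_const (measurable_pi_apply _)
    rw [hpre, Measure.map_apply hvec hpm]
    set s' : ℕ → ℝ := fun i => if h : i < n then s ⟨i, h⟩ else 0 with hs'def
    have hs'nn : ∀ i, 0 ≤ s' i := fun i => by
      by_cases h : i < n <;> simp [hs'def, h, hs _]
    have hsum : ∑ i ∈ Finset.range n, s' i = T := by
      rw [hTdef, ← Fin.sum_univ_eq_sum_range (fun i => s' i) n]
      exact Finset.sum_congr rfl fun k _ => by simp [hs'def, k.isLt]
    have hset : ((fun ω : Ω' => fun i : ℕ => J i ω) ⁻¹'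
          {j : ℕ → ℝ | ∀ k : Fin n, s k * l < j (k : ℕ)})
        = ⋂ i ∈ Finset.range n, J i ⁻¹' Ioi (s' i * l) := by
      ext ω
      simp only [mem_preimage, mem_setOf_eq, Finset.mem_range, mem_iInter, mem_Ioi]
      constructor
      · intro h i hi
        simpa [hs'def, hi] using h ⟨i, hi⟩
      · intro h k
        simpa [hs'def, k.isLt] using h k k.isLt
    rw [hset, (ProbabilityTheory.iIndepFun_iff_measure_inter_preimage_eq_mul.mp hJindep) (Finset.range n)
      (sets := fun i => Ioi (s' i * l)) (fun i _ => measurableSet_Ioi)]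
    have hfac : ∀ i : ℕ, ℙ (J i ⁻¹' Ioi (s' i * l))
        = ENNReal.ofReal (Real.exp (-(lam * (s' i * l)))) := by
      intro i
      have h0 : J i ⁻¹' Ioi (s' i * l) = {ω | s' i * l < J i ω} := rfl
      have h1 : (ℙ (J i ⁻¹' Ioi (s' i * l))).toReal = Real.exp (-(lam * (s' i * l))) := by
        rw [h0]; exact hJexp i _ (mul_nonneg (hs'nn i) hl.le)
      rw [← h1, ENNReal.ofReal_toReal (measure_ne_top _ _)]
    simp_rw [hfac]
    rw [← ENNReal.ofReal_prod_of_nonneg (fun i _ => (Real.exp_pos _).le), ← Real.exp_sum]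
    congr 1
    have h1 : ∀ i : ℕ, -(lam * (s' i * l)) = -(lam * l) * s' i := fun i => by ring
    simp_rw [h1]
    rw [← Finset.mul_sum, hsum]
    ring
  have hae : ∀ᵐ l ∂(Measure.map L ℙ), 0 < l := by
    rw [ae_map_iff hLmeas.aemeasurable (measurableSet_Ioi (a := (0 : ℝ)))]
    exact ae_of_all _ hLpos
  have hin : ∫⁻ l, (Measure.map (fun ω : Ω' => fun i : ℕ => J i ω) ℙ) (Prod.mk l ⁻¹' S)
        ∂(Measure.map L ℙ)
      = ∫⁻ l, ENNReal.ofReal (Real.exp (-(lam * T * l))) ∂(Measure.map L ℙ) :=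
    lintegral_congr_ae (hae.mono fun l hl => hinner l hl)
  have hmeasexp : Measurable fun l : ℝ => ENNReal.ofReal (Real.exp (-(lam * T * l))) :=
    ENNReal.measurable_ofReal.comp
      (Real.measurable_exp.comp (measurable_id.const_mul (lam * T)).neg)
  have hint : Integrable (fun ω => Real.exp (-(lam * T * L ω))) ℙ := by
    apply (integrable_const (1 : ℝ)).mono'
    · exact (Real.measurable_exp.comp ((hLmeas.const_mul (lam * T)).neg)).aestronglyMeasurable
    · refine ae_of_all _ fun ω => ?_
      rw [Real.norm_eq_abs, abs_of_pos (Real.exp_pos _)]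
      exact Real.exp_le_one_iff.mpr (neg_nonpos.mpr (mul_nonneg hc (hLpos ω).le))
  rw [hin, lintegral_map hmeasexp hLmeas,
    ← ofReal_integral_eq_lintegral_ofReal hint (ae_of_all _ fun ω => (Real.exp_pos _).le)]

/-- Equality in distribution for Model 1: the Schur-constant Mittag-Leffler flight times
`(J₁^{(ν)},…,Jₙ^{(ν)})` equal in distribution `(J₁/L,…,Jₙ/L)` where the `J_k` are i.i.d.
exponential of rate λ, independent of a Lamperti variable `L` of parameter ν (so the
non-Markovian random flight equals in distribution the Markovian one with rate `λL`). -/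
theorem model1_flight_times_lamperti_representation
    {Ω : Type*} [MeasureSpace Ω] [IsProbabilityMeasure (ℙ : Measure Ω)]
    {Ω' : Type*} [MeasureSpace Ω'] [IsProbabilityMeasure (ℙ : Measure Ω')]
    (ν lam : ℝ) (hν : ν ∈ Set.Ioc (0 : ℝ) 1) (hlam : 0 < lam)
    -- the Schur-constant Mittag-Leffler flight times:
    (Jν : ℕ → Ω → ℝ) (hJνmeas : ∀ i, Measurable (Jν i)) (hJνpos : ∀ i ω, 0 < Jν i ω)
    (hJνsurv : ∀ n : ℕ, 1 ≤ n → ∀ s : Fin n → ℝ, (∀ k, 0 ≤ s k) →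
      (ℙ {ω | ∀ k : Fin n, s k < Jν k ω}).toReal =
        mittagLeffler ν (-(lam ^ ν * (∑ k, s k) ^ ν)))
    -- i.i.d. exponential flight times of rate λ:
    (J : ℕ → Ω' → ℝ) (hJmeas : ∀ i, Measurable (J i)) (hJpos : ∀ i ω, 0 < J i ω)
    (hJindep : iIndepFun J ℙ)
    (hJexp : ∀ (i : ℕ) (s : ℝ), 0 ≤ s →
      (ℙ {ω | s < J i ω}).toReal = Real.exp (-(lam * s)))
    -- a Lamperti variable `L` of parameter ν, independent of the `J_k`:
    (L : Ω' → ℝ) (hLmeas : Measurable L) (hLpos : ∀ ω, 0 < L ω)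
    (hLlap : ∀ η : ℝ, 0 ≤ η →
      ∫ ω, Real.exp (-(η * L ω)) ∂ℙ = mittagLeffler ν (-(η ^ ν)))
    (hindep : IndepFun (fun ω => fun i => J i ω) L ℙ) :
    ∀ n : ℕ,
      Measure.map (fun ω => fun k : Fin n => Jν k ω) ℙ =
        Measure.map (fun ω => fun k : Fin n => J k ω / L ω) ℙ := by
  intro n
  match n with
  | 0 =>
    have h1 : (fun ω : Ω => fun k : Fin 0 => Jν k ω)
        = fun _ => (fun k : Fin 0 => (0 : ℝ)) := funext fun ω => Subsingleton.elim _ _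
    have h2 : (fun ω : Ω' => fun k : Fin 0 => J k ω / L ω)
        = fun _ => (fun k : Fin 0 => (0 : ℝ)) := funext fun ω => Subsingleton.elim _ _
    rw [h1, h2, Measure.map_const, Measure.map_const, measure_univ, measure_univ]
  | Nat.succ m =>
    have hfm : Measurable (fun ω : Ω => fun k : Fin (m + 1) => Jν k ω) :=
      measurable_pi_lambda _ fun k => hJνmeas k
    have hgm : Measurable (fun ω : Ω' => fun k : Fin (m + 1) => J k ω / L ω) :=
      measurable_pi_lambda _ fun k => (hJmeas k).div hLmeas
    haveI : IsProbabilityMeasure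
        (Measure.map (fun ω : Ω => fun k : Fin (m + 1) => Jν k ω) ℙ) :=
      Measure.isProbabilityMeasure_map hfm.aemeasurable
    haveI : IsProbabilityMeasure
        (Measure.map (fun ω : Ω' => fun k : Fin (m + 1) => J k ω / L ω) ℙ) :=
      Measure.isProbabilityMeasure_map hgm.aemeasurable
    refine ext_of_generate_finite (pi univ '' pi univ fun _ : Fin (m + 1) => range Ioi)
      ?_ (IsPiSystem.pi fun _ => isPiSystem_Ioi) ?_ (by simp)
    · refine (generateFrom_eq_pi (fun _ => ?_) fun _ => ?_).symm
      · rw [← borel_eq_generateFrom_Ioi]; exact BorelSpace.measurable_eq.symm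
      · refine ⟨fun k => Ioi (-(k : ℝ)), fun k => mem_range_self _, ?_⟩
        ext x
        simp only [mem_iUnion, mem_Ioi, mem_univ, iff_true]
        obtain ⟨k, hk⟩ := exists_nat_gt (-x)
        exact ⟨k, by linarith⟩
    · rintro _ ⟨t, ht, rfl⟩
      choose a ha using fun k => ht k (mem_univ k)
      set b : Fin (m + 1) → ℝ := fun k => max (a k) 0 with hbdef
      have hbnn : ∀ k, 0 ≤ b k := fun k => le_max_right _ _
      have hsumnn : 0 ≤ ∑ k, b k := Finset.sum_nonneg fun k _ => hbnn k
      have hmeasPi : MeasurableSet (univ.pi t) :=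
        MeasurableSet.univ_pi fun k => (ha k) ▸ measurableSet_Ioi
      have hpre1 : (fun ω : Ω => fun k : Fin (m + 1) => Jν k ω) ⁻¹' (univ.pi t)
          = {ω | ∀ k : Fin (m + 1), b k < Jν k ω} := by
        ext ω
        simp only [mem_preimage, mem_univ_pi, mem_setOf_eq, ← ha, mem_Ioi, hbdef]
        exact forall_congr' fun k =>
          (max_lt_iff.trans (and_iff_left (hJνpos k ω))).symm
      have hpre2 : (fun ω : Ω' => fun k : Fin (m + 1) => J k ω / L ω) ⁻¹' (univ.pi t)
          = {ω | ∀ k : Fin (m + 1), b k < J k ω / L ω} := by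
        ext ω
        simp only [mem_preimage, mem_univ_pi, mem_setOf_eq, ← ha, mem_Ioi, hbdef]
        exact forall_congr' fun k =>
          (max_lt_iff.trans (and_iff_left (div_pos (hJpos k ω) (hLpos ω)))).symm
      rw [Measure.map_apply hfm hmeasPi, Measure.map_apply hgm hmeasPi, hpre1, hpre2]
      have hsetdiv : {ω | ∀ k : Fin (m + 1), b k < J k ω / L ω}
          = {ω | ∀ k : Fin (m + 1), b k * L ω < J k ω} := by
        ext ω
        exact forall_congr' fun k => lt_div_iff₀ (hLpos ω)
      rw [hsetdiv,
        survival_div_eq lam hlam J hJmeas hJindep hJexp L hLmeas hLpos hindep _ b hbnn,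
        hLlap (lam * ∑ k, b k) (mul_nonneg hlam.le hsumnn),
        Real.mul_rpow hlam.le hsumnn,
        ← hJνsurv (m + 1) (Nat.succ_le_succ (Nat.zero_le m)) b hbnn,
        ENNReal.ofReal_toReal (measure_ne_top _ _)]
end
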